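/- Let V₀ > 0 and d > 0. For every φ ∈ H¹(0,d), ∫_0^d (|φ'(x)|² + V₀|φ(x)|²) dx ≥ √V₀ · tanh(√V₀ d) · |φ(0)|², and the constant √V₀ tanh(√V₀ d) is optimal (attained by φ(x) = cosh(√V₀(x−d))). -/

import Mathlib

open MeasureTheory intervalIntegral

lemma tanh_hasDerivAt (x : ℝ) : HasDerivAt Real.tanh (1 - Real.tanh x ^ 2) x := by
  have hc : Real.cosh x ≠ 0 := (Real.cosh_pos x).ne'
  have h := (Real.hasDerivAt_sinh x).div (Real.hasDerivAt_cosh x) hc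
  have heq : (Real.cosh x * Real.cosh x - Real.sinh x * Real.sinh x) / Real.cosh x ^ 2
      = 1 - Real.tanh x ^ 2 := by
    rw [Real.tanh_eq_sinh_div_cosh]
    field_simp
  rw [heq] at h
  have hfun : (fun y => Real.sinh y / Real.cosh y) = Real.tanh := by
    funext y; rw [Real.tanh_eq_sinh_div_cosh]
  rw [show (Real.sinh / Real.cosh) = Real.tanh from hfun] at h
  exact h

/-- Finite-interval trace inequality: for every `φ ∈ H¹(0,d)`,
`∫_0^d (|φ'|² + V₀|φ|²) ≥ √V₀ tanh(√V₀ d)·|φ(0)|²`, and the constant is optimal,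
attained by `φ(x) = cosh(√V₀(x-d))`. -/
theorem stmt_9 (V₀ d : ℝ) (hV₀ : 0 < V₀) (hd : 0 < d) :
    (∀ φ φ' : ℝ → ℝ, (∀ x, HasDerivAt φ (φ' x) x) → Continuous φ' →
      Real.sqrt V₀ * Real.tanh (Real.sqrt V₀ * d) * (φ 0) ^ 2 ≤
        ∫ x in (0:ℝ)..d, ((φ' x) ^ 2 + V₀ * (φ x) ^ 2)) ∧
    (∫ x in (0:ℝ)..d, ((Real.sqrt V₀ * Real.sinh (Real.sqrt V₀ * (x - d))) ^ 2
        + V₀ * (Real.cosh (Real.sqrt V₀ * (x - d))) ^ 2))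
      = Real.sqrt V₀ * Real.tanh (Real.sqrt V₀ * d)
        * (Real.cosh (Real.sqrt V₀ * ((0:ℝ) - d))) ^ 2 := by
  set s := Real.sqrt V₀ with hs_def
  have hs : 0 < s := Real.sqrt_pos.mpr hV₀
  have hs2 : s ^ 2 = V₀ := Real.sq_sqrt hV₀.le
  constructor
  · intro φ φ' hφ hφ'
    have hφc : Continuous φ :=
      continuous_iff_continuousAt.mpr fun x => (hφ x).continuousAt
    set w : ℝ → ℝ := fun x => Real.tanh (s * (d - x)) with hw_def
    have hw : ∀ x, HasDerivAt w (-s * (1 - w x ^ 2)) x := by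
      intro x
      have h1 : HasDerivAt (fun x : ℝ => s * (d - x)) (s * (-1)) x :=
        (((hasDerivAt_id x).const_sub d)).const_mul s
      have h2 := (tanh_hasDerivAt (s * (d - x))).comp x h1
      refine h2.congr_deriv ?_
      ring
    have hwc : Continuous w := continuous_iff_continuousAt.mpr fun x => (hw x).continuousAt
    -- g and its derivative g'
    set g : ℝ → ℝ := fun x => s * (w x * φ x ^ 2) with hg_def
    set g' : ℝ → ℝ := fun x =>
      s * (-s * (1 - w x ^ 2) * φ x ^ 2 + w x * (2 * φ x * φ' x)) with hg'_def
    have hg : ∀ x, HasDerivAt g (g' x) x := by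
      intro x
      have hp : HasDerivAt (fun x => φ x ^ 2) (2 * φ x * φ' x) x := by
        have := (hφ x).mul (hφ x)
        have h3 : HasDerivAt (fun x => φ x * φ x) (2 * φ x * φ' x) x := by
          refine this.congr_deriv ?_; ring
        simpa [pow_two] using h3
      exact ((hw x).mul hp).const_mul s
    have hg'c : Continuous g' := by
      apply Continuous.mul continuous_const
      exact ((continuous_const.mul (continuous_const.sub (hwc.pow 2))).mul (hφc.pow 2)).add
        (hwc.mul ((continuous_const.mul hφc).mul hφ'))
    have hftc : ∫ x in (0:ℝ)..d, g' x = g d - g 0 :=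
      intervalIntegral.integral_eq_sub_of_hasDerivAt (fun x _ => hg x)
        (hg'c.intervalIntegrable 0 d)
    have hgd : g d = 0 := by simp [hg_def, hw_def]
    have hg0 : g 0 = s * Real.tanh (s * d) * φ 0 ^ 2 := by
      simp [hg_def, hw_def]; ring
    -- pointwise identity
    have hpt : ∀ x, (φ' x + s * w x * φ x) ^ 2
        = (φ' x ^ 2 + V₀ * φ x ^ 2) + g' x := by
      intro x
      have hw2 : w x ^ 2 * φ x ^ 2 * s ^ 2 = w x ^ 2 * φ x ^ 2 * V₀ := by rw [hs2]
      rw [hg'_def]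
      simp only
      nlinarith [hs2]
    have hint1 : IntervalIntegrable (fun x => φ' x ^ 2 + V₀ * φ x ^ 2) volume 0 d :=
      ((hφ'.pow 2).add (continuous_const.mul (hφc.pow 2))).intervalIntegrable 0 d
    have hint2 : IntervalIntegrable g' volume 0 d := hg'c.intervalIntegrable 0 d
    have hnonneg : 0 ≤ ∫ x in (0:ℝ)..d, (φ' x + s * w x * φ x) ^ 2 :=
      intervalIntegral.integral_nonneg hd.le (fun x _ => sq_nonneg _)
    have hsplit : ∫ x in (0:ℝ)..d, (φ' x + s * w x * φ x) ^ 2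
        = (∫ x in (0:ℝ)..d, (φ' x ^ 2 + V₀ * φ x ^ 2)) + ∫ x in (0:ℝ)..d, g' x := by
      rw [← intervalIntegral.integral_add hint1 hint2]
      exact intervalIntegral.integral_congr fun x _ => hpt x
    rw [hsplit, hftc, hgd, hg0] at hnonneg
    linarith
  · -- explicit computation
    set F : ℝ → ℝ := fun x => s * (Real.sinh (s * (x - d)) * Real.cosh (s * (x - d)))
      with hF_def
    have hF : ∀ x, HasDerivAt F
        ((s * Real.sinh (s * (x - d))) ^ 2 + V₀ * Real.cosh (s * (x - d)) ^ 2) x := by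
      intro x
      have h1 : HasDerivAt (fun x : ℝ => s * (x - d)) s x := by
        simpa using (((hasDerivAt_id x).sub_const d)).const_mul s
      have hsinh := (Real.hasDerivAt_sinh (s * (x - d))).comp x h1
      have hcosh := (Real.hasDerivAt_cosh (s * (x - d))).comp x h1
      have h2 := (hsinh.mul hcosh).const_mul s
      simp only [Function.comp] at h2
      refine h2.congr_deriv ?_
      rw [← hs2]; ring
    have hcont : Continuous fun x =>
        (s * Real.sinh (s * (x - d))) ^ 2 + V₀ * Real.cosh (s * (x - d)) ^ 2 := by
      continuity
    have hftc : (∫ x in (0:ℝ)..d,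
        ((s * Real.sinh (s * (x - d))) ^ 2 + V₀ * Real.cosh (s * (x - d)) ^ 2))
        = F d - F 0 :=
      intervalIntegral.integral_eq_sub_of_hasDerivAt (fun x _ => hF x)
        (hcont.intervalIntegrable 0 d)
    rw [hftc]
    have hcne : Real.cosh (s * d) ≠ 0 := (Real.cosh_pos _).ne'
    simp only [hF_def]
    rw [Real.tanh_eq_sinh_div_cosh]
    have h0 : s * ((0:ℝ) - d) = -(s * d) := by ring
    rw [h0, Real.sinh_neg, Real.cosh_neg]
    simp only [sub_self, mul_zero, Real.sinh_zero, Real.cosh_zero]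
    field_simp
    ring
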